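/- arXiv:1711.00821 — 3 statements merged into one kernel-verified Lean document; each statement's English description precedes it below -/
import Mathlib

section
/- Let G be a connected weighted graph whose minimum spanning tree has all edges of weight 1, and let S be a subgraph of G containing the MST. Suppose the vertices of S are partitioned into clusters, each cluster being a connected subgraph of diameter at least 1. For any path P in the graph obtained by contracting each cluster to a single vertex, where the edges of P are MST edges (each of weight 1), the diameter of the subgraph of G formed by the clusters of P together with the MST edges of P is at most twice the sum of the diameters of the clusters in P. -/
open scoped ENNReal

/-- The weight of a walk: the sum of the weights of its edges. -/
noncomputable def walkWeight {V : Type} (w : Sym2 V → ℝ≥0∞) {G : SimpleGraph V} {x y : V}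
    (p : G.Walk x y) : ℝ≥0∞ :=
  (p.edges.map w).sum

/-- Shortest-path distance in a weighted graph (`⊤` if there is no walk). -/
noncomputable def wdist {V : Type} (G : SimpleGraph V) (w : Sym2 V → ℝ≥0∞) (x y : V) : ℝ≥0∞ :=
  ⨅ p : G.Walk x y, walkWeight w p

/-- Diameter of the subgraph of `G` induced on the vertex set `A` (shortest paths within `A`). -/
noncomputable def setDiam {V : Type} (G : SimpleGraph V) (w : Sym2 V → ℝ≥0∞) (A : Set V) :
    ℝ≥0∞ :=
  ⨆ x : A, ⨆ y : A, wdist (G.induce A) (fun e => w (Sym2.map Subtype.val e)) x y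

/-- Diameter of a subgraph `H` measured over the vertex set `A` (paths may use all of `H`). -/
noncomputable def diamOn {V : Type} (H : SimpleGraph V) (w : Sym2 V → ℝ≥0∞) (A : Set V) :
    ℝ≥0∞ :=
  ⨆ x ∈ A, ⨆ y ∈ A, wdist H w x y

lemma wdist_le' {V : Type} {G : SimpleGraph V} (w : Sym2 V → ℝ≥0∞) {x y : V}
    (p : G.Walk x y) : wdist G w x y ≤ walkWeight w p :=
  iInf_le _ p

lemma walkWeight_append {V : Type} (w : Sym2 V → ℝ≥0∞) {G : SimpleGraph V} {x y z : V}
    (p : G.Walk x y) (q : G.Walk y z) :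
    walkWeight w (p.append q) = walkWeight w p + walkWeight w q := by
  simp [walkWeight, SimpleGraph.Walk.edges_append]

lemma wdist_triangle {V : Type} (G : SimpleGraph V) (w : Sym2 V → ℝ≥0∞) (x y z : V) :
    wdist G w x z ≤ wdist G w x y + wdist G w y z := by
  conv_rhs => rw [wdist, wdist, ENNReal.iInf_add]
  refine le_iInf fun p => ?_
  rw [ENNReal.add_iInf]
  refine le_iInf fun q => ?_
  exact (wdist_le' w (p.append q)).trans_eq (walkWeight_append w p q)

lemma wdist_comm {V : Type} (G : SimpleGraph V) (w : Sym2 V → ℝ≥0∞) (x y : V) :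
    wdist G w x y = wdist G w y x := by
  have h : ∀ a b : V, wdist G w a b ≤ wdist G w b a := by
    intro a b
    refine le_iInf fun p => ?_
    refine (wdist_le' w p.reverse).trans_eq ?_
    simp [walkWeight, SimpleGraph.Walk.edges_reverse, List.sum_reverse]
  exact le_antisymm (h x y) (h y x)

/-- A path `P` of pairwise disjoint connected clusters `C 0, …, C k`, each of diameter at
least `1`, consecutively joined by MST edges of weight `1`: the diameter of the subgraph
formed by the clusters of `P` together with the MST edges of `P` is at most twice the sum
of the diameters of the clusters of `P`. -/
theorem stmt_3 {V : Type} (G : SimpleGraph V) (w : Sym2 V → ℝ≥0∞)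
    (k : ℕ) (C : Fin (k + 1) → Set V)
    (hdisj : ∀ i j, i ≠ j → Disjoint (C i) (C j))
    (hconn : ∀ i, (G.induce (C i)).Connected)
    (hdiam1 : ∀ i, 1 ≤ setDiam G w (C i))
    (e : Fin k → V × V)
    (hmem : ∀ i, (e i).1 ∈ C i.castSucc ∧ (e i).2 ∈ C i.succ)
    (hadj : ∀ i, G.Adj (e i).1 (e i).2)
    (hw1 : ∀ i, w s((e i).1, (e i).2) = 1)
    (H : SimpleGraph V)
    (hH : H = SimpleGraph.fromEdgeSet
        ({f | ∃ i, ∃ x ∈ C i, ∃ y ∈ C i, G.Adj x y ∧ f = s(x, y)} ∪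
          {f | ∃ i, f = s((e i).1, (e i).2)})) :
    diamOn H w (⋃ i, C i) ≤ 2 * ∑ i, setDiam G w (C i) := by
  -- notation
  set D : Fin (k + 1) → ℝ≥0∞ := fun i => setDiam G w (C i) with hD
  -- within a cluster, the H-distance is at most the cluster diameter
  have hcl : ∀ i, ∀ x ∈ C i, ∀ y ∈ C i, wdist H w x y ≤ D i := by
    intro i x hx y hy
    let f : G.induce (C i) →g H :=
      ⟨Subtype.val, fun {a b} hab => by
        rw [hH, SimpleGraph.fromEdgeSet_adj]
        exact ⟨Or.inl ⟨i, a.val, a.prop, b.val, b.prop, hab, rfl⟩,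
          fun h => hab.ne (Subtype.val_injective h)⟩⟩
    have key : wdist H w x y ≤
        wdist (G.induce (C i)) (fun e => w (Sym2.map Subtype.val e)) ⟨x, hx⟩ ⟨y, hy⟩ := by
      refine le_iInf fun p => ?_
      refine (wdist_le' w (p.map f)).trans_eq ?_
      simp only [walkWeight, SimpleGraph.Walk.edges_map, List.map_map]
      rfl
    refine key.trans ?_
    exact le_iSup_of_le ⟨x, hx⟩ (le_iSup_of_le ⟨y, hy⟩ le_rfl)
  -- each connecting edge has H-distance at most 1
  have hedge : ∀ i : Fin k, wdist H w (e i).1 (e i).2 ≤ 1 := by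
    intro i
    have hAdj : H.Adj (e i).1 (e i).2 := by
      rw [hH, SimpleGraph.fromEdgeSet_adj]
      exact ⟨Or.inr ⟨i, rfl⟩, (hadj i).ne⟩
    refine (wdist_le' w (hAdj.toWalk)).trans_eq ?_
    simp [walkWeight, hw1 i]
  -- main claim by induction on the endpoint cluster
  have key : ∀ b a : Fin (k + 1), a ≤ b → ∀ x ∈ C a, ∀ y ∈ C b,
      wdist H w x y ≤ 2 * ∑ i ∈ Finset.Icc a b, D i := by
    intro b
    induction b using Fin.induction with
    | zero =>
      intro a ha x hx y hy
      have : a = 0 := le_antisymm ha (Fin.zero_le a)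
      subst this
      rw [Finset.Icc_self, Finset.sum_singleton, two_mul]
      exact (hcl 0 x hx y hy).trans le_self_add
    | succ j ih =>
      intro a ha x hx y hy
      rcases eq_or_lt_of_le ha with heq | hlt
      · subst heq
        rw [Finset.Icc_self, Finset.sum_singleton, two_mul]
        exact (hcl _ x hx y hy).trans le_self_add
      · have ha' : a ≤ j.castSucc := Fin.le_castSucc_iff.mpr hlt
        have hIcc : Finset.Icc a j.succ = insert j.succ (Finset.Icc a j.castSucc) := by
          ext z
          simp only [Finset.mem_Icc, Finset.mem_insert]
          constructor
          · rintro ⟨h1, h2⟩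
            rcases eq_or_lt_of_le h2 with h | h
            · exact Or.inl h
            · exact Or.inr ⟨h1, Fin.le_castSucc_iff.mpr h⟩
          · rintro (rfl | ⟨h1, h2⟩)
            · exact ⟨ha, le_rfl⟩
            · exact ⟨h1, h2.trans (Fin.castSucc_lt_succ : j.castSucc < j.succ).le⟩
        have hnot : j.succ ∉ Finset.Icc a j.castSucc := fun h =>
          absurd (Finset.mem_Icc.mp h).2 (Fin.castSucc_lt_succ : j.castSucc < j.succ).not_ge
        rw [hIcc, Finset.sum_insert hnot]
        have h1 : wdist H w x y ≤
            wdist H w x (e j).1 + wdist H w (e j).1 (e j).2 + wdist H w (e j).2 y :=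
          (wdist_triangle H w x (e j).2 y).trans
            (add_le_add_left (wdist_triangle H w x (e j).1 (e j).2) _)
        have h2 : wdist H w x (e j).1 ≤ 2 * ∑ i ∈ Finset.Icc a j.castSucc, D i :=
          ih a ha' x hx (e j).1 (hmem j).1
        have h3 : wdist H w (e j).2 y ≤ D j.succ := hcl j.succ (e j).2 (hmem j).2 y hy
        calc wdist H w x y
            ≤ wdist H w x (e j).1 + wdist H w (e j).1 (e j).2 + wdist H w (e j).2 y := h1
          _ ≤ 2 * ∑ i ∈ Finset.Icc a j.castSucc, D i + D j.succ + D j.succ :=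
              add_le_add (add_le_add h2 ((hedge j).trans (hdiam1 j.succ))) h3
          _ = 2 * (D j.succ + ∑ i ∈ Finset.Icc a j.castSucc, D i) := by ring
  -- conclude
  refine iSup₂_le fun x hx => iSup₂_le fun y hy => ?_
  obtain ⟨a, hxa⟩ := Set.mem_iUnion.mp hx
  obtain ⟨b, hyb⟩ := Set.mem_iUnion.mp hy
  have hmono : ∀ a b : Fin (k + 1),
      2 * ∑ i ∈ Finset.Icc a b, D i ≤ 2 * ∑ i, D i := by
    intro a b
    refine mul_le_mul_right ?_ 2
    exact Finset.sum_le_sum_of_subset (Finset.subset_univ _)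
  rcases le_total a b with hab | hba
  · exact (key b a hab x hxa y hyb).trans (hmono a b)
  · rw [wdist_comm]
    exact (key a b hba y hyb x hxa).trans (hmono b a)
end

section
/- Let F be a forest on n nodes where each node has weight (diameter) at least 1, and suppose some tree T in F has a path whose total node weight is at least 2ℓ and T contains a vertex of degree at least 3. Then there exists a minimal subtree C of T containing a branching vertex X and all of X's neighbors such that the total node weight of some path in C is at least 2ℓ, and moreover every path in C has total node weight at most 2ℓ + w_max, where w_max is the maximum node weight. -/
open SimpleGraph

section Aux

variable {V : Type} {G : SimpleGraph V} {Cs : Set V}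

/-- Lift a walk in `G` whose support lies in `Cs` to a walk in `G.induce Cs`. -/
def induceUp : ∀ {x y : V} (p : G.Walk x y) (h : ∀ v ∈ p.support, v ∈ Cs),
    (G.induce Cs).Walk ⟨x, h x p.start_mem_support⟩ ⟨y, h y p.end_mem_support⟩
  | _, _, Walk.nil, _ => Walk.nil
  | _, _, Walk.cons a p, h =>
      Walk.cons (by exact a)
        (induceUp p (fun v hv => h v (by simp [Walk.support_cons, hv])))

lemma induceUp_support : ∀ {x y : V} (p : G.Walk x y) (h : ∀ v ∈ p.support, v ∈ Cs),
    ((induceUp p h).support.map Subtype.val) = p.support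
  | _, _, Walk.nil, _ => rfl
  | _, _, Walk.cons a p, h => by
      exact congrArg (List.cons _) (induceUp_support p _)

lemma induceUp_isPath {x y : V} (p : G.Walk x y) (h : ∀ v ∈ p.support, v ∈ Cs)
    (hp : p.IsPath) : (induceUp p h).IsPath := by
  rw [Walk.isPath_def]
  exact List.Nodup.of_map Subtype.val (by rw [induceUp_support p h]; exact hp.support_nodup)

lemma induceUp_wt (nw : V → ℝ) {x y : V} (p : G.Walk x y) (h : ∀ v ∈ p.support, v ∈ Cs) :
    ((induceUp p h).support.map fun v => nw v.1).sum = (p.support.map nw).sum := by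
  rw [← induceUp_support p h, List.map_map]
  rfl

/-- The hom from an induced subgraph to the ambient graph. -/
def induceDown : G.induce Cs →g G := ⟨Subtype.val, fun h => h⟩

end Aux

section Tree

variable {V : Type} [DecidableEq V] {G : SimpleGraph V}

lemma acyclic_cons_of_mem (hac : G.IsAcyclic) {x y z : V} (q : G.Walk x y)
    (hq : q.IsPath) (hz : G.Adj x z) (hmem : z ∈ q.support) :
    ∃ d : G.Walk z y, q = Walk.cons hz d := by
  have hpu := isAcyclic_iff_path_unique.mp hac
  have h1 : (⟨q.takeUntil z hmem, hq.takeUntil hmem⟩ : G.Path x z)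
      = ⟨Walk.cons hz Walk.nil, by simp [hz.ne]⟩ := hpu _ _
  have h2 : q.takeUntil z hmem = Walk.cons hz Walk.nil := congrArg Subtype.val h1
  refine ⟨q.dropUntil z hmem, ?_⟩
  conv_lhs => rw [← q.take_spec hmem]
  rw [h2]
  simp

/-- Second-vertex characterization. -/
lemma second_vert (hac : G.IsAcyclic) {x y z : V} (q : G.Walk x y)
    (hq : q.IsPath) (hz : G.Adj x z) (hmem : z ∈ q.support) :
    q.support.tail.head? = some z := by
  obtain ⟨d, rfl⟩ := acyclic_cons_of_mem hac q hq hz hmem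
  rw [Walk.support_cons]
  rw [d.support_eq_cons]
  rfl

/-- An endpoint whose `S`-neighbors all lie on the path has a unique `S`-neighbor. -/
lemma uniq_nbr (hac : G.IsAcyclic) {x y : V} {S : Finset V} (q : G.Walk x y)
    (hq : q.IsPath) (hleaf : ∀ z ∈ S, G.Adj x z → z ∈ q.support) :
    ∀ z1 z2, z1 ∈ S → z2 ∈ S → G.Adj x z1 → G.Adj x z2 → z1 = z2 := by
  intro z1 z2 h1 h2 a1 a2
  have e1 := second_vert hac q hq a1 (hleaf z1 h1 a1)
  have e2 := second_vert hac q hq a2 (hleaf z2 h2 a2)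
  rw [e1] at e2
  exact Option.some.inj e2

lemma surgery_piece {e b : V} {S : Finset V} (d : G.Walk e b) (hd : d.IsPath)
    (hdS : ∀ v ∈ d.support, v ∈ S) (hbe : b ≠ e) :
    ∃ (v' : V) (r' : G.Walk v' b), G.Adj e v' ∧ r'.IsPath ∧ e ∉ r'.support ∧
      ∀ v ∈ r'.support, v ∈ S := by
  cases d with
  | nil => exact absurd rfl hbe
  | cons h' r' =>
    rw [Walk.cons_isPath_iff] at hd
    refine ⟨_, r', h', hd.1, hd.2, fun v hv => hdS v ?_⟩
    rw [Walk.support_cons, List.mem_cons]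
    exact Or.inr hv

end Tree

section Main

variable {V : Type} [Fintype V] [DecidableEq V] {G : SimpleGraph V}

lemma aux_extend (nw : V → ℝ) (hw1 : ∀ v, 1 ≤ nw v) :
    ∀ (n : ℕ) (S : Finset V) (x y : V) (p : G.Walk x y), p.IsPath →
      (∀ v ∈ p.support, v ∈ S) → (S \ p.support.toFinset).card ≤ n →
      ∃ (x' y' : V) (q : G.Walk x' y'), q.IsPath ∧ (∀ v ∈ q.support, v ∈ S) ∧
        (p.support.map nw).sum ≤ (q.support.map nw).sum ∧
        (∀ z ∈ S, G.Adj x' z → z ∈ q.support) ∧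
        (∀ z ∈ S, G.Adj y' z → z ∈ q.support) := by
  intro n
  induction n with
  | zero =>
    intro S x y p hp hS hcard
    have hsub : ∀ z ∈ S, z ∈ p.support := by
      intro z hz
      by_contra hzp
      have : z ∈ S \ p.support.toFinset := by
        simp [Finset.mem_sdiff, hz, hzp]
      have := Finset.card_pos.mpr ⟨z, this⟩
      omega
    exact ⟨x, y, p, hp, hS, le_refl _, fun z hz _ => hsub z hz, fun z hz _ => hsub z hz⟩
  | succ n ih =>
    intro S x y p hp hS hcard
    by_cases hx : ∃ z, z ∈ S ∧ G.Adj x z ∧ z ∉ p.support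
    · obtain ⟨z, hzS, hadj, hzp⟩ := hx
      have hq : (Walk.cons hadj.symm p).IsPath := (Walk.cons_isPath_iff _ _).mpr ⟨hp, hzp⟩
      have hqS : ∀ v ∈ (Walk.cons hadj.symm p).support, v ∈ S := by
        intro v hv; rw [Walk.support_cons, List.mem_cons] at hv
        rcases hv with rfl | hv
        · exact hzS
        · exact hS v hv
      have hcard' : (S \ (Walk.cons hadj.symm p).support.toFinset).card ≤ n := by
        rw [Walk.support_cons, List.toFinset_cons, Finset.sdiff_insert]
        have hzmem : z ∈ S \ p.support.toFinset := by simp [Finset.mem_sdiff, hzS, hzp]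
        rw [Finset.card_erase_of_mem hzmem]
        omega
      obtain ⟨x', y', q, h1, h2, h3, h4, h5⟩ := ih S z y _ hq hqS hcard'
      refine ⟨x', y', q, h1, h2, le_trans ?_ h3, h4, h5⟩
      rw [Walk.support_cons, List.map_cons, List.sum_cons]
      nlinarith [hw1 z]
    · by_cases hy : ∃ z, z ∈ S ∧ G.Adj y z ∧ z ∉ p.support
      · obtain ⟨z, hzS, hadj, hzp⟩ := hy
        have hzp' : z ∉ p.reverse.support := by rwa [Walk.support_reverse, List.mem_reverse]
        have hq : (Walk.cons hadj.symm p.reverse).IsPath :=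
          (Walk.cons_isPath_iff _ _).mpr ⟨hp.reverse, hzp'⟩
        have hqS : ∀ v ∈ (Walk.cons hadj.symm p.reverse).support, v ∈ S := by
          intro v hv; rw [Walk.support_cons, List.mem_cons] at hv
          rcases hv with rfl | hv
          · exact hzS
          · rw [Walk.support_reverse, List.mem_reverse] at hv; exact hS v hv
        have hcard' : (S \ (Walk.cons hadj.symm p.reverse).support.toFinset).card ≤ n := by
          rw [Walk.support_cons, List.toFinset_cons, Finset.sdiff_insert,
            Walk.support_reverse, List.toFinset_reverse]
          have hzmem : z ∈ S \ p.support.toFinset := by simp [Finset.mem_sdiff, hzS, hzp]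
          rw [Finset.card_erase_of_mem hzmem]
          omega
        obtain ⟨x', y', q, h1, h2, h3, h4, h5⟩ := ih S z x _ hq hqS hcard'
        refine ⟨x', y', q, h1, h2, le_trans ?_ h3, h4, h5⟩
        rw [Walk.support_cons, List.map_cons, List.sum_cons, Walk.support_reverse,
          List.map_reverse, List.sum_reverse]
        nlinarith [hw1 z]
      · push_neg at hx hy
        exact ⟨x, y, p, hp, hS, le_refl _,
          fun z hz ha => hx z hz ha, fun z hz ha => hy z hz ha⟩

lemma aux_main (hac : G.IsAcyclic) (nw : V → ℝ) (wmax ℓ : ℝ)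
    (hw1 : ∀ v, 1 ≤ nw v) (hwmax : ∀ v, nw v ≤ wmax) (hwℓ : wmax ≤ ℓ)
    (X : V) (hX3 : 3 ≤ (Set.toFinite (G.neighborSet X)).toFinset.card) :
    ∀ (n : ℕ) (S : Finset V), S.card ≤ n → X ∈ S → (∀ z, G.Adj X z → z ∈ S) →
      (∀ a b, a ∈ S → b ∈ S → ∃ w : G.Walk a b, ∀ v ∈ w.support, v ∈ S) →
      (∃ (x y : V) (p : G.Walk x y), p.IsPath ∧ (∀ v ∈ p.support, v ∈ S) ∧
        2 * ℓ ≤ (p.support.map nw).sum) →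
      ∃ S' : Finset V, X ∈ S' ∧ (∀ z, G.Adj X z → z ∈ S') ∧
        (∀ a b, a ∈ S' → b ∈ S' → ∃ w : G.Walk a b, ∀ v ∈ w.support, v ∈ S') ∧
        (∃ (x y : V) (p : G.Walk x y), p.IsPath ∧ (∀ v ∈ p.support, v ∈ S') ∧
          2 * ℓ ≤ (p.support.map nw).sum) ∧
        (∀ (x y : V) (p : G.Walk x y), p.IsPath → (∀ v ∈ p.support, v ∈ S') →
          (p.support.map nw).sum ≤ 2 * ℓ + wmax) := by
  have hw0 : (1:ℝ) ≤ wmax := le_trans (hw1 X) (hwmax X)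
  intro n
  induction n with
  | zero =>
    intro S hcard hXS _ _ _
    have := Finset.card_pos.mpr ⟨X, hXS⟩
    omega
  | succ n ih =>
    intro S hcard hXS hnb hconn hheavy
    by_cases hub : ∀ (x y : V) (p : G.Walk x y), p.IsPath → (∀ v ∈ p.support, v ∈ S) →
        (p.support.map nw).sum ≤ 2 * ℓ + wmax
    · exact ⟨S, hXS, hnb, hconn, hheavy, hub⟩
    push_neg at hub
    obtain ⟨x₀, y₀, p, hp, hpS, hbig⟩ := hub
    obtain ⟨x', y', q, hq, hqS, hqsum, hqlx, hqly⟩ :=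
      aux_extend nw hw1 (S \ p.support.toFinset).card S x₀ y₀ p hp hpS (le_refl _)
    have hqbig : 2 * ℓ + wmax < (q.support.map nw).sum := lt_of_lt_of_le hbig hqsum
    -- length bound
    have hlen : 4 ≤ q.support.length := by
      by_contra hcon
      push_neg at hcon
      have hsb : (q.support.map nw).sum ≤ (q.support.length : ℕ) • wmax := by
        have := List.sum_le_card_nsmul (q.support.map nw) wmax ?_
        · simpa using this
        · intro x hx
          obtain ⟨v, _, rfl⟩ := List.mem_map.mp hx
          exact hwmax v
      rw [nsmul_eq_mul] at hsb
      have h3 : (q.support.length : ℝ) ≤ 3 := by exact_mod_cast Nat.lt_succ_iff.mp hcon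
      nlinarith
    -- leaf property at y' for the reversed walk
    have hqly' : ∀ z ∈ S, G.Adj y' z → z ∈ q.reverse.support := by
      intro z hz ha
      rw [Walk.support_reverse, List.mem_reverse]
      exact hqly z hz ha
    -- endpoints are not X
    have hxX : x' ≠ X := by
      intro hEq
      have hcard1 : (Set.toFinite (G.neighborSet X)).toFinset.card ≤ 1 := by
        apply Finset.card_le_one.mpr
        intro a ha b hb
        rw [Set.Finite.mem_toFinset] at ha hb
        refine uniq_nbr hac q hq hqlx a b (hnb a ha) (hnb b hb) ?_ ?_ <;>
          rw [hEq] <;> assumption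
      omega
    have hyX : y' ≠ X := by
      intro hEq
      have hcard1 : (Set.toFinite (G.neighborSet X)).toFinset.card ≤ 1 := by
        apply Finset.card_le_one.mpr
        intro a ha b hb
        rw [Set.Finite.mem_toFinset] at ha hb
        refine uniq_nbr hac q.reverse hq.reverse hqly' a b (hnb a ha) (hnb b hb) ?_ ?_ <;>
          rw [hEq] <;> assumption
      omega
    -- not both endpoints adjacent to X
    have hnotboth : ¬(G.Adj X x' ∧ G.Adj X y') := by
      rintro ⟨ha, hb⟩
      have hmemX : X ∈ q.support := hqlx X hXS ha.symm
      obtain ⟨d, rfl⟩ := acyclic_cons_of_mem hac q hq ha.symm hmemX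
      have hd : d.IsPath := ((Walk.cons_isPath_iff _ _).mp hq).1
      have hpu := isAcyclic_iff_path_unique.mp hac
      have h1 : (⟨d, hd⟩ : G.Path X y')
          = ⟨Walk.cons hb Walk.nil, by simp [hb.ne]⟩ := hpu _ _
      have h2 : d = Walk.cons hb Walk.nil := congrArg Subtype.val h1
      subst h2
      simp at hlen
    -- choose removable first endpoint
    obtain ⟨e, f, qq, hqqp, hqqS, hqqsum, hqqleaf, heX, heAdj, hqqlen⟩ :
        ∃ (e f : V) (qq : G.Walk e f), qq.IsPath ∧ (∀ v ∈ qq.support, v ∈ S) ∧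
          2 * ℓ + wmax < (qq.support.map nw).sum ∧
          (∀ z ∈ S, G.Adj e z → z ∈ qq.support) ∧ e ≠ X ∧ ¬G.Adj X e ∧
          4 ≤ qq.support.length := by
      by_cases hax : G.Adj X x'
      · refine ⟨y', x', q.reverse, hq.reverse, ?_, ?_, hqly', hyX,
          fun h => hnotboth ⟨hax, h⟩, ?_⟩
        · intro v hv
          rw [Walk.support_reverse, List.mem_reverse] at hv
          exact hqS v hv
        · rw [Walk.support_reverse, List.map_reverse, List.sum_reverse]
          exact hqbig
        · rw [Walk.support_reverse, List.length_reverse]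
          exact hlen
      · exact ⟨x', y', q, hq, hqS, hqbig, hqlx, hxX, hax, hlen⟩
    -- uniqueness of the S-neighbor of e
    have huniq : ∀ z1 z2, z1 ∈ S → z2 ∈ S → G.Adj e z1 → G.Adj e z2 → z1 = z2 :=
      uniq_nbr hac qq hqqp hqqleaf
    have heS : e ∈ S := hqqS e qq.start_mem_support
    -- decompose qq
    cases qq with
    | nil => simp at hqqlen
    | cons h r =>
      rename_i u
      rw [Walk.cons_isPath_iff] at hqqp
      obtain ⟨hrp, heR⟩ := hqqp
      have hrS : ∀ v ∈ r.support, v ∈ S := by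
        intro v hv
        exact hqqS v (by rw [Walk.support_cons, List.mem_cons]; exact Or.inr hv)
      have hrsum : 2 * ℓ ≤ (r.support.map nw).sum := by
        rw [Walk.support_cons, List.map_cons, List.sum_cons] at hqqsum
        have := hwmax e
        linarith
      set S' := S.erase e with hS'def
      have hmemS' : ∀ v, v ∈ S' ↔ v ≠ e ∧ v ∈ S := fun v => Finset.mem_erase
      have hcard' : S'.card ≤ n := by
        rw [hS'def, Finset.card_erase_of_mem heS]
        omega
      have hXS' : X ∈ S' := (hmemS' X).mpr ⟨Ne.symm heX, hXS⟩
      have hnb' : ∀ z, G.Adj X z → z ∈ S' := by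
        intro z hz
        refine (hmemS' z).mpr ⟨fun hc => heAdj (hc ▸ hz), hnb z hz⟩
      have hconn' : ∀ a b, a ∈ S' → b ∈ S' → ∃ w : G.Walk a b, ∀ v ∈ w.support, v ∈ S' := by
        intro a b ha hb
        obtain ⟨hae, haS⟩ := (hmemS' a).mp ha
        obtain ⟨hbe, hbS⟩ := (hmemS' b).mp hb
        obtain ⟨w0, hw0S⟩ := hconn a b haS hbS
        set w : G.Walk a b := (w0.toPath : G.Walk a b) with hwdef
        have hwp : w.IsPath := w0.toPath.2
        have hwS : ∀ v ∈ w.support, v ∈ S := fun v hv =>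
          hw0S v (w0.support_toPath_subset hv)
        by_cases hmem : e ∈ w.support
        · have htp : (w.takeUntil e hmem).IsPath := hwp.takeUntil hmem
          have hdp : (w.dropUntil e hmem).IsPath := hwp.dropUntil hmem
          have htS : ∀ v ∈ (w.takeUntil e hmem).support, v ∈ S := fun v hv =>
            hwS v (w.support_takeUntil_subset hmem hv)
          have hdS : ∀ v ∈ (w.dropUntil e hmem).support, v ∈ S := fun v hv =>
            hwS v (w.support_dropUntil_subset hmem hv)
          obtain ⟨v1, r1, ha1, hr1p, her1, hr1S⟩ :=
            surgery_piece (w.dropUntil e hmem) hdp hdS hbe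
          have htS' : ∀ v ∈ (w.takeUntil e hmem).reverse.support, v ∈ S := by
            intro v hv
            rw [Walk.support_reverse, List.mem_reverse] at hv
            exact htS v hv
          obtain ⟨v2, r2, ha2, hr2p, her2, hr2S⟩ :=
            surgery_piece (w.takeUntil e hmem).reverse htp.reverse htS' hae
          have hv12 : v2 = v1 :=
            huniq v2 v1 (hr2S v2 r2.start_mem_support) (hr1S v1 r1.start_mem_support) ha2 ha1
          subst hv12
          refine ⟨r2.reverse.append r1, ?_⟩
          intro v hv
          rw [Walk.support_append, List.mem_append] at hv
          rcases hv with hv | hv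
          · rw [Walk.support_reverse, List.mem_reverse] at hv
            exact (hmemS' v).mpr ⟨fun hc => her2 (hc ▸ hv), hr2S v hv⟩
          · have hv' := List.mem_of_mem_tail hv
            exact (hmemS' v).mpr ⟨fun hc => her1 (hc ▸ hv'), hr1S v hv'⟩
        · exact ⟨w, fun v hv => (hmemS' v).mpr ⟨fun hc => hmem (hc ▸ hv), hwS v hv⟩⟩
      have hheavy' : ∃ (x y : V) (p : G.Walk x y), p.IsPath ∧
          (∀ v ∈ p.support, v ∈ S') ∧ 2 * ℓ ≤ (p.support.map nw).sum := by
        refine ⟨u, f, r, hrp, ?_, hrsum⟩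
        intro v hv
        exact (hmemS' v).mpr ⟨fun hc => heR (hc ▸ hv), hrS v hv⟩
      exact ih S' hcard' hXS' hnb' hconn' hheavy'

end Main

/-- Let `G` be a tree (a tree `T` of the forest `F` of ε-clusters) whose vertices carry
node weights (`ε`-cluster diameters) `nw v` with `1 ≤ nw v ≤ wmax ≤ ℓ`.  If `G` has a
path of total node weight at least `2ℓ` and a vertex of degree at least `3`, then there is
a (minimal) subtree `Cs` of `G` containing a branching vertex `X` and all of `X`'s
neighbors, such that some path of `Cs` has total node weight at least `2ℓ`, and every path
of `Cs` has total node weight at most `2ℓ + wmax`. -/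
theorem stmt_6 {V : Type} [Fintype V] (G : SimpleGraph V) (hG : G.IsTree)
    (nw : V → ℝ) (wmax ℓ : ℝ)
    (hw1 : ∀ v, 1 ≤ nw v) (hwmax : ∀ v, nw v ≤ wmax) (hwℓ : wmax ≤ ℓ)
    (hpath : ∃ (x y : V) (p : G.Walk x y), p.IsPath ∧ 2 * ℓ ≤ (p.support.map nw).sum)
    (hbranch : ∃ v : V, 3 ≤ (Set.toFinite (G.neighborSet v)).toFinset.card) :
    ∃ (X : V) (Cs : Set V),
      3 ≤ (Set.toFinite (G.neighborSet X)).toFinset.card ∧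
      X ∈ Cs ∧ G.neighborSet X ⊆ Cs ∧ (G.induce Cs).Connected ∧
      (∃ (x y : ↥Cs) (p : (G.induce Cs).Walk x y), p.IsPath ∧
        2 * ℓ ≤ (p.support.map fun v => nw v.1).sum) ∧
      (∀ (x y : ↥Cs) (p : (G.induce Cs).Walk x y), p.IsPath →
        (p.support.map fun v => nw v.1).sum ≤ 2 * ℓ + wmax) := by
  classical
  obtain ⟨X, hX3⟩ := hbranch
  have hac : G.IsAcyclic := hG.2
  obtain ⟨S', hXS', hnb', hconn', hheavy', hub'⟩ :=
    aux_main hac nw wmax ℓ hw1 hwmax hwℓ X hX3 (Fintype.card V) Finset.univ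
      (by rw [Finset.card_univ]) (Finset.mem_univ X) (fun z _ => Finset.mem_univ z)
      (fun a b _ _ => (hG.1.preconnected a b).elim
        (fun w => ⟨w, fun v _ => Finset.mem_univ v⟩))
      (by
        obtain ⟨x, y, p, hp, hsum⟩ := hpath
        exact ⟨x, y, p, hp, fun v _ => Finset.mem_univ v, hsum⟩)
  refine ⟨X, ↑S', hX3, hXS', fun z hz => hnb' z hz, ?_, ?_, ?_⟩
  · haveI : Nonempty ↥((↑S' : Set V)) := ⟨⟨X, hXS'⟩⟩
    refine Connected.mk fun u v => ?_
    obtain ⟨w, hw⟩ := hconn' u.1 v.1 u.2 v.2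
    exact ⟨induceUp w hw⟩
  · obtain ⟨x, y, p, hp, hpS, hsum⟩ := hheavy'
    refine ⟨⟨x, hpS x p.start_mem_support⟩, ⟨y, hpS y p.end_mem_support⟩,
      induceUp p hpS, induceUp_isPath p hpS hp, ?_⟩
    exact le_trans hsum (induceUp_wt nw p hpS).ge
  · intro x y p hp
    have hp' : (p.map induceDown).IsPath :=
      Walk.map_isPath_of_injective Subtype.val_injective hp
    have hS : ∀ v ∈ (p.map induceDown).support, v ∈ S' := by
      intro v hv
      rw [Walk.support_map, List.mem_map] at hv
      obtain ⟨u, _, rfl⟩ := hv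
      exact u.2
    have := hub' _ _ (p.map induceDown) hp' hS
    rwa [Walk.support_map, List.map_map] at this
end

section
/- Let T be a tree with unit-weight edges, and let 𝒯 be a maximal collection of vertex-disjoint subtrees of T each of diameter d, so that deleting them leaves components (trees in 𝒯') each of diameter < d. For each tree A ∈ 𝒯, let C_A be the union of A with all trees of 𝒯' adjacent to A (connected by a single edge of T), assigning each tree of 𝒯' to exactly one neighbor in 𝒯. Then each C_A is connected and has diameter at most 3d + 2, and the clusters {C_A} together with possibly-unassigned structure partition the vertices of T. -/
/-- The (unit-weight) diameter of the subgraph of `G` induced on a finite vertex set `A`. -/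
noncomputable def fdiam {V : Type} [Fintype V] [DecidableEq V] (G : SimpleGraph V)
    (A : Finset V) : ℕ :=
  Finset.univ.sup fun p : (↑A : Set V) × (↑A : Set V) =>
    (G.induce (↑A : Set V)).dist p.1 p.2

namespace Cluster12
open SimpleGraph

variable {V : Type} (G : SimpleGraph V)

noncomputable def ndist (v : V) (A : Finset V) : ℕ :=
  if h : A.Nonempty then A.inf' h (G.dist v) else 0

lemma ndist_le {v a : V} {A : Finset V} (h : a ∈ A) : ndist G v A ≤ G.dist v a := by
  rw [ndist, dif_pos ⟨a, h⟩]; exact Finset.inf'_le _ h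

lemma exists_ndist {A : Finset V} (h : A.Nonempty) (v : V) :
    ∃ a ∈ A, ndist G v A = G.dist v a := by
  rw [ndist, dif_pos h]
  obtain ⟨a, ha, h'⟩ := Finset.exists_mem_eq_inf' h (G.dist v)
  exact ⟨a, ha, h'⟩

lemma nat_le {c a b x y : ℕ} (hy : y < c) (h : c * a + x ≤ c * b + y) : a ≤ b := by
  by_contra hl
  push_neg at hl
  have h2 : c * b + c ≤ c * a := by
    calc c * b + c = c * (b + 1) := by ring
    _ ≤ c * a := Nat.mul_le_mul_left c hl
  have h3 : c * b + (c + x) ≤ c * b + y := by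
    calc c * b + (c + x) = (c * b + c) + x := by ring
    _ ≤ c * a + x := Nat.add_le_add_right h2 x
    _ ≤ c * b + y := h
  have := Nat.le_of_add_le_add_left h3
  omega

lemma nat_inj {c a b x y : ℕ} (hx : x < c) (hy : y < c) (h : c * a + x = c * b + y) :
    a = b ∧ x = y := by
  have h1 : a = b := le_antisymm (nat_le hy h.le) (nat_le hx h.ge)
  subst h1
  exact ⟨rfl, by omega⟩

lemma key_nat {c e f x0 y0 x1 y1 t : ℕ} (he : e < c) (hf : f < c)
    (hmin : c * x0 + e ≤ c * y0 + f) (h1 : x1 + t ≤ x0) (h2 : y0 ≤ t + y1) :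
    c * x1 + e ≤ c * y1 + f := by
  have hxy : x0 ≤ y0 := nat_le hf hmin
  rcases Nat.lt_or_ge x1 y1 with hlt | hge
  · have hm : c * (x1 + 1) ≤ c * y1 := Nat.mul_le_mul_left c hlt
    have h' : c * (x1 + 1) = c * x1 + c := by ring
    rw [h'] at hm
    linarith
  · have hx1y1 : x1 = y1 := by omega
    have hx0y0 : x0 = y0 := by omega
    subst hx1y1; subst hx0y0
    have hef : e ≤ f := Nat.le_of_add_le_add_left hmin
    exact Nat.add_le_add_left hef _

/-- transfer a walk whose support lies in `S` to the induced subgraph -/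
lemma walk_transfer {S : Set V} {x y : V} (p : G.Walk x y) (h : ∀ z ∈ p.support, z ∈ S) :
    ∃ q : (G.induce S).Walk ⟨x, h x p.start_mem_support⟩ ⟨y, h y p.end_mem_support⟩,
      q.length = p.length := by
  induction p with
  | nil => exact ⟨.nil, rfl⟩
  | @cons u u' w hadj p ih =>
    have h' : ∀ z ∈ p.support, z ∈ S := fun z hz => h z (by simp [hz])
    obtain ⟨q, hq⟩ := ih h'
    have hadj' : (G.induce S).Adj ⟨u, h u (Walk.start_mem_support _)⟩
        ⟨u', h' u' (Walk.start_mem_support _)⟩ := hadj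
    exact ⟨q.cons hadj', by simp [hq]⟩

lemma dist_le_induce {S : Set V} {a b : S} (q : (G.induce S).Walk a b) :
    G.dist a.1 b.1 ≤ q.length := by
  have hle := SimpleGraph.dist_le (q.map (⟨Subtype.val, fun h => h⟩ : G.induce S →g G))
  have e := Walk.length_map (⟨Subtype.val, fun h => h⟩ : G.induce S →g G) q
  rw [e] at hle
  exact hle

lemma dist_split [DecidableEq V] (hc : G.Connected) {x y w : V} (p : G.Walk x y)
    (hp : p.length = G.dist x y) (hw : w ∈ p.support) :
    G.dist x w + G.dist w y = p.length := by
  have h1 := SimpleGraph.dist_le (p.takeUntil w hw)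
  have h2 := SimpleGraph.dist_le (p.dropUntil w hw)
  have h3 : (p.takeUntil w hw).length + (p.dropUntil w hw).length = p.length := by
    rw [← Walk.length_append, Walk.take_spec]
  have h4 : G.dist x y ≤ G.dist x w + G.dist w y := hc.dist_triangle
  have h5 := p.length_takeUntil_le hw
  omega

lemma exists_mem_support_dist [DecidableEq V] (hc : G.Connected) :
    ∀ {x y : V} (p : G.Walk x y), p.length = G.dist x y → ∀ k, k ≤ p.length →
      ∃ w ∈ p.support, G.dist x w = k := by
  intro x y p
  induction p with
  | nil =>
    intro _ k hk
    have hk0 : k = 0 := Nat.le_zero.mp (by simpa using hk)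
    subst hk0
    exact ⟨_, Walk.start_mem_support _, SimpleGraph.dist_self⟩
  | @cons u u' w hadj q ih =>
    intro hp k hk
    rcases Nat.eq_zero_or_pos k with rfl | hkpos
    · exact ⟨u, by simp, by simp⟩
    · have hq : q.length = G.dist u' w := by
        have hle : G.dist u' w ≤ q.length := SimpleGraph.dist_le q
        have h1 : G.dist u w ≤ 1 + G.dist u' w := by
          have := hc.dist_triangle (u := u) (v := u') (w := w)
          have h2 : G.dist u u' ≤ 1 := by
            have := SimpleGraph.dist_le hadj.toWalk
            simpa using this
          omega
        have h3 : (Walk.cons hadj q).length = q.length + 1 := by simp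
        rw [h3] at hp
        omega
      obtain ⟨k', rfl⟩ : ∃ k', k = k' + 1 := ⟨k - 1, by omega⟩
      have hk' : k' ≤ q.length := by
        have : (Walk.cons hadj q).length = q.length + 1 := by simp
        omega
      obtain ⟨z, hz, hdz⟩ := ih hq k' hk'
      refine ⟨z, by simp [hz], ?_⟩
      have hsplit := dist_split G hc q hq hz
      have htri : G.dist u w ≤ G.dist u z + G.dist z w := hc.dist_triangle
      have htri2 : G.dist u z ≤ G.dist u u' + G.dist u' z := hc.dist_triangle
      have h2 : G.dist u u' ≤ 1 := by
        have := SimpleGraph.dist_le hadj.toWalk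
        simpa using this
      have h3 : (Walk.cons hadj q).length = q.length + 1 := by simp
      rw [h3] at hp
      omega

noncomputable def enc (V : Type) [Fintype V] [DecidableEq V] (A : Finset V) : ℕ :=
  (Fintype.equivFin (Finset V) A : ℕ)

lemma enc_lt {V : Type} [Fintype V] [DecidableEq V] (A : Finset V) :
    enc V A < Fintype.card (Finset V) :=
  (Fintype.equivFin (Finset V) A).isLt

lemma enc_inj {V : Type} [Fintype V] [DecidableEq V] {A B : Finset V}
    (h : enc V A = enc V B) : A = B :=
  (Fintype.equivFin (Finset V)).injective (Fin.val_injective h)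

noncomputable def score {V : Type} [Fintype V] [DecidableEq V] (G : SimpleGraph V)
    (v : V) (A : Finset V) : ℕ :=
  Fintype.card (Finset V) * ndist G v A + enc V A

lemma score_inj {V : Type} [Fintype V] [DecidableEq V] {G : SimpleGraph V} {v : V}
    {A B : Finset V} (h : score G v A = score G v B) : A = B :=
  enc_inj (nat_inj (enc_lt A) (enc_lt B) h).2

def homOfLE {S T : Set V} (h : S ⊆ T) : G.induce S →g G.induce T :=
  ⟨fun z => ⟨z.1, h z.2⟩, fun hadj => hadj⟩

lemma le_fdiam {V : Type} [Fintype V] [DecidableEq V] (G : SimpleGraph V) (A : Finset V)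
    (a b : (↑A : Set V)) : (G.induce (↑A : Set V)).dist a b ≤ fdiam G A :=
  Finset.le_sup (f := fun p : (↑A : Set V) × (↑A : Set V) =>
    (G.induce (↑A : Set V)).dist p.1 p.2) (Finset.mem_univ (a, b))

end Cluster12

open Cluster12 SimpleGraph in
/-- Let `T` be a tree with unit-weight edges and `𝒯` a maximal collection of
vertex-disjoint connected subtrees each of diameter `d` (so every remaining disjoint
connected piece has diameter `< d`).  Then each tree `A ∈ 𝒯` can be grown to a cluster
`C A ⊇ A` by absorbing adjacent leftover components (each assigned to exactly one
neighbor), so that each `C A` is connected with diameter at most `3d + 2`, the clusters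
are pairwise disjoint, and together they partition the vertices of `T`. -/
theorem stmt_12 {V : Type} [Fintype V] [DecidableEq V] (G : SimpleGraph V)
    (hG : G.IsTree) (d : ℕ) (hd : 1 ≤ d)
    (𝒯 : Finset (Finset V)) (hne : 𝒯.Nonempty)
    (hdisj : ∀ A ∈ 𝒯, ∀ B ∈ 𝒯, A ≠ B → Disjoint A B)
    (hconn : ∀ A ∈ 𝒯, (G.induce (↑A : Set V)).Connected)
    (hdiam : ∀ A ∈ 𝒯, fdiam G A = d)
    (hmax : ∀ B : Finset V, (∀ A ∈ 𝒯, Disjoint A B) → B.Nonempty →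
      (G.induce (↑B : Set V)).Connected → fdiam G B < d) :
    ∃ C : Finset V → Finset V,
      (∀ A ∈ 𝒯, A ⊆ C A ∧ (G.induce (↑(C A) : Set V)).Connected ∧
        fdiam G (C A) ≤ 3 * d + 2) ∧
      (∀ A ∈ 𝒯, ∀ B ∈ 𝒯, A ≠ B → Disjoint (C A) (C B)) ∧
      (∀ v : V, ∃ A ∈ 𝒯, v ∈ C A) := by
  classical
  have hGc : G.Connected := hG.isConnected
  have hcard : ∀ A : Finset V, enc V A < Fintype.card (Finset V) := enc_lt
  -- every tree in 𝒯 is nonempty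
  have hTne : ∀ A ∈ 𝒯, A.Nonempty := by
    intro A hA
    rcases A.eq_empty_or_nonempty with h | h
    · exfalso
      have hd' := hdiam A hA
      subst h
      haveI hE : IsEmpty ((↑(∅ : Finset V) : Set V)) := Set.isEmpty_coe_sort.mpr (by simp)
      rw [fdiam, Finset.univ_eq_empty, Finset.sup_empty, Nat.bot_eq_zero] at hd'
      omega
    · exact h
  -- choose minimizer
  have hAvE : ∀ v : V, ∃ A ∈ 𝒯, ∀ B ∈ 𝒯, score G v A ≤ score G v B :=
    fun v => 𝒯.exists_min_image (score G v) hne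
  choose Av hAvmem hAvmin using hAvE
  have hAvu : ∀ v A, A ∈ 𝒯 → (∀ B ∈ 𝒯, score G v A ≤ score G v B) → Av v = A :=
    fun v A hA hm => score_inj (le_antisymm (hAvmin v A hA) (hm _ (hAvmem v)))
  -- every vertex is within distance d of some tree
  have hclose : ∀ v : V, ∃ A ∈ 𝒯, ndist G v A ≤ d := by
    intro v
    by_contra hcon
    push_neg at hcon
    set B : Finset V := Finset.univ.filter (fun w => G.dist v w ≤ d) with hB
    have hmemB : ∀ w, w ∈ B ↔ G.dist v w ≤ d := fun w => by simp [hB]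
    have hdisjB : ∀ A ∈ 𝒯, Disjoint A B := by
      intro A hA
      rw [Finset.disjoint_left]
      intro a ha haB
      have h1 := ndist_le G ha (v := v)
      have h2 := (hmemB a).1 haB
      have h3 := hcon A hA
      omega
    have hvB : v ∈ B := (hmemB v).2 (by simp [SimpleGraph.dist_self])
    choose qw hqw using fun w => hGc.exists_walk_length_eq_dist v w
    have hsupB : ∀ w, w ∈ B → ∀ z ∈ (qw w).support, z ∈ (↑B : Set V) := by
      intro w hw z hz
      have hsplit := dist_split G hGc (qw w) (hqw w) hz
      have h2 := (hmemB w).1 hw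
      have h4 := hqw w
      rw [Finset.mem_coe, hmemB]
      omega
    have hreachB : ∀ w : (↑B : Set V),
        (G.induce (↑B : Set V)).Reachable ⟨v, Finset.mem_coe.mpr hvB⟩ w := by
      intro w
      have hw : (w : V) ∈ B := Finset.mem_coe.mp w.2
      obtain ⟨q, -⟩ := walk_transfer G (qw w.1) (hsupB w.1 hw)
      exact ⟨q⟩
    have hconnB : (G.induce (↑B : Set V)).Connected := by
      rw [connected_iff]
      exact ⟨fun a b => (hreachB a).symm.trans (hreachB b), ⟨⟨v, Finset.mem_coe.mpr hvB⟩⟩⟩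
    obtain ⟨A₀, hA₀⟩ := hne
    obtain ⟨a₀, ha₀, hnd₀⟩ := exists_ndist G (hTne A₀ hA₀) v
    have hfar : d + 1 ≤ G.dist v a₀ := by have := hcon A₀ hA₀; omega
    obtain ⟨w, hwsup, hwd⟩ := exists_mem_support_dist G hGc (qw a₀) (hqw a₀) d
      (by rw [hqw a₀]; omega)
    have hwB : w ∈ B := (hmemB w).2 (by omega)
    obtain ⟨m, hm⟩ := (hreachB ⟨w, Finset.mem_coe.mpr hwB⟩).exists_walk_length_eq_dist
    have h1 : G.dist v w ≤ m.length := dist_le_induce G m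
    have h2 := le_fdiam G B ⟨v, Finset.mem_coe.mpr hvB⟩ ⟨w, Finset.mem_coe.mpr hwB⟩
    have h3 := hmax B hdisjB ⟨v, hvB⟩ hconnB
    omega
  have hndd : ∀ v : V, ndist G v (Av v) ≤ d := by
    intro v
    obtain ⟨A, hA, hle⟩ := hclose v
    have h1 := hAvmin v A hA
    simp only [score] at h1
    have h2 := nat_le (hcard A) h1
    omega
  choose av havmem havdist using fun v => exists_ndist G (hTne (Av v) (hAvmem v)) v
  choose pv hpv using fun v => hGc.exists_walk_length_eq_dist v (av v)
  -- stability: all vertices on the chosen shortest path have the same assignment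
  have hstab : ∀ v : V, ∀ w ∈ (pv v).support, Av w = Av v := by
    intro v w hw
    have hsplit := dist_split G hGc (pv v) (hpv v) hw
    apply hAvu w (Av v) (hAvmem v)
    intro B hB
    have hx1 : ndist G w (Av v) ≤ G.dist w (av v) := ndist_le G (havmem v)
    have hy : ndist G v B ≤ G.dist v w + ndist G w B := by
      obtain ⟨b, hb, hbd⟩ := exists_ndist G (hTne B hB) w
      have h1 : ndist G v B ≤ G.dist v b := ndist_le G hb
      have h2 : G.dist v b ≤ G.dist v w + G.dist w b := hGc.dist_triangle
      omega
    have hmin := hAvmin v B hB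
    simp only [score] at hmin ⊢
    have hpl := hpv v
    have hvd := havdist v
    exact key_nat (t := G.dist v w) (hcard _) (hcard _) hmin (by omega) (by omega)
  -- the clusters
  set C : Finset V → Finset V := fun A => Finset.univ.filter (fun v => Av v = A) with hC
  have hmemC : ∀ v A, v ∈ C A ↔ Av v = A := by intro v A; simp [hC]
  refine ⟨C, ?_, ?_, ?_⟩
  · intro A hA
    -- subset
    have hsub : A ⊆ C A := by
      intro a ha
      rw [hmemC]
      apply hAvu a A hA
      intro B hB
      by_cases hBA : B = A
      · subst hBA; exact le_refl _
      · have h0 : ndist G a A = 0 := by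
          have h := ndist_le G ha (v := a)
          rw [SimpleGraph.dist_self] at h
          omega
        have h1 : 1 ≤ ndist G a B := by
          obtain ⟨b, hb, hbd⟩ := exists_ndist G (hTne B hB) a
          have hanb : a ∉ B := Finset.disjoint_left.mp
            (hdisj A hA B hB (fun h => hBA h.symm)) ha
          have hab : a ≠ b := fun h => hanb (h ▸ hb)
          have := hGc.pos_dist_of_ne hab
          omega
        simp only [score]
        have hc1 : Fintype.card (Finset V) ≤ Fintype.card (Finset V) * ndist G a B :=
          Nat.le_mul_of_pos_right _ (by omega)
        have hc2 := hcard A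
        rw [h0, mul_zero]
        omega
    have hsubC : ∀ v, Av v = A → ∀ z ∈ (pv v).support, z ∈ (↑(C A) : Set V) := by
      intro v hv z hz
      rw [Finset.mem_coe, hmemC, hstab v z hz, hv]
    have hAsub : (↑A : Set V) ⊆ (↑(C A) : Set V) := by
      intro z hz
      exact Finset.mem_coe.mpr (hsub (Finset.mem_coe.mp hz))
    have havmemA : ∀ v, Av v = A → av v ∈ (↑A : Set V) := by
      intro v hv
      exact Finset.mem_coe.mpr (hv ▸ havmem v)
    refine ⟨hsub, ?_, ?_⟩
    · -- connected
      rw [connected_iff]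
      constructor
      · rintro ⟨x, hx⟩ ⟨y, hy⟩
        have hx' : Av x = A := (hmemC x A).mp (Finset.mem_coe.mp hx)
        have hy' : Av y = A := (hmemC y A).mp (Finset.mem_coe.mp hy)
        obtain ⟨qx, -⟩ := walk_transfer G (pv x) (hsubC x hx')
        obtain ⟨qy, -⟩ := walk_transfer G (pv y) (hsubC y hy')
        have hr : (G.induce (↑A : Set V)).Reachable ⟨av x, havmemA x hx'⟩
            ⟨av y, havmemA y hy'⟩ := (hconn A hA) _ _
        have hr2 := hr.map (homOfLE G hAsub)
        exact (qx.reachable).trans (hr2.trans qy.reachable.symm)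
      · obtain ⟨a, ha⟩ := hTne A hA
        exact ⟨⟨a, hAsub (Finset.mem_coe.mpr ha)⟩⟩
    · -- diameter
      rw [fdiam]
      apply Finset.sup_le
      rintro ⟨⟨x, hx⟩, ⟨y, hy⟩⟩ -
      have hx' : Av x = A := (hmemC x A).mp (Finset.mem_coe.mp hx)
      have hy' : Av y = A := (hmemC y A).mp (Finset.mem_coe.mp hy)
      obtain ⟨qx, hqx⟩ := walk_transfer G (pv x) (hsubC x hx')
      obtain ⟨qy, hqy⟩ := walk_transfer G (pv y) (hsubC y hy')
      obtain ⟨m, hm⟩ := ((hconn A hA) ⟨av x, havmemA x hx'⟩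
        ⟨av y, havmemA y hy'⟩).exists_walk_length_eq_dist
      have hmd : m.length ≤ d := by
        rw [hm]
        have := le_fdiam G A ⟨av x, havmemA x hx'⟩ ⟨av y, havmemA y hy'⟩
        rw [hdiam A hA] at this
        exact this
      have hqxd : qx.length ≤ d := by
        rw [hqx, hpv x, ← havdist x]
        exact hndd x
      have hqyd : qy.length ≤ d := by
        rw [hqy, hpv y, ← havdist y]
        exact hndd y
      have hmm : (m.map (homOfLE G hAsub)).length = m.length := Walk.length_map _ _
      have hdle := SimpleGraph.dist_le (qx.append ((m.map (homOfLE G hAsub)).append qy.reverse))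
      erw [Walk.length_append, Walk.length_append, Walk.length_reverse] at hdle
      erw [Walk.length_map, hqy] at hdle
      calc (G.induce (↑(C A) : Set V)).dist ⟨x, hx⟩ ⟨y, hy⟩ ≤ _ := hdle
      _ ≤ 3 * d + 2 := by omega
  · -- pairwise disjoint
    intro A hA B hB hAB
    rw [Finset.disjoint_left]
    intro v hvA hvB
    rw [hmemC] at hvA hvB
    exact hAB (hvA ▸ hvB ▸ rfl)
  · -- covering
    exact fun v => ⟨Av v, hAvmem v, (hmemC v _).mpr rfl⟩
end
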